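/- There exists a constant c > 0 such that for all n ≥ 2, ⌈log₂(2^n !) / log₂(n · 2^(n-1))⌉ ≥ c · 2^n. In particular c = 1/4 works. -/

import Mathlib

theorem stmt_4 :
    ∃ c : ℝ, c = 1 / 4 ∧ 0 < c ∧ ∀ n : ℕ, 2 ≤ n →
      (⌈Real.logb 2 (Nat.factorial (2 ^ n)) / Real.logb 2 ((n : ℝ) * 2 ^ (n - 1))⌉ : ℝ) ≥
        c * 2 ^ n := by
  refine ⟨1/4, rfl, by norm_num, fun n hn => ?_⟩
  set m := n - 1 with hm
  have hnm : n = m + 1 := (Nat.succ_pred_eq_of_pos (by omega)).symm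
  -- denominator
  have hn2 : (2:ℝ) ≤ n := by exact_mod_cast hn
  have hDeq : Real.logb 2 ((n : ℝ) * 2 ^ m) = Real.logb 2 n + m := by
    rw [Real.logb_mul (by positivity) (by positivity), Real.logb_pow,
      Real.logb_self_eq_one (by norm_num), mul_one]
  have hlogn : Real.logb 2 (n : ℝ) ≤ m := by
    have h1 : (n : ℝ) ≤ 2 ^ m := by
      exact_mod_cast (by have := @Nat.lt_two_pow_self m; omega : n ≤ 2 ^ m)
    calc Real.logb 2 (n:ℝ) ≤ Real.logb 2 (2 ^ m) :=
          Real.logb_le_logb_of_le (by norm_num) (by positivity) h1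
      _ = m := by rw [Real.logb_pow, Real.logb_self_eq_one (by norm_num), mul_one]
  have hDpos : 0 < Real.logb 2 ((n : ℝ) * 2 ^ m) := by
    apply Real.logb_pos (by norm_num)
    have : (1:ℝ) < n := by linarith
    nlinarith [pow_pos (show (0:ℝ) < 2 by norm_num) m, one_le_pow₀ (show (1:ℝ) ≤ 2 by norm_num) (n := m)]
  have hmpos : (1:ℝ) ≤ m := by
    have : 1 ≤ m := by omega
    exact_mod_cast this
  have hDle : Real.logb 2 ((n : ℝ) * 2 ^ m) ≤ 2 * m := by
    rw [hDeq]; linarith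
  -- numerator
  have hfact : (2 ^ m : ℕ) ^ (2 ^ m : ℕ) ≤ Nat.factorial (2 ^ n) := by
    have h := Nat.factorial_mul_pow_le_factorial (m := 2 ^ m) (n := 2 ^ m)
    calc (2 ^ m : ℕ) ^ (2 ^ m : ℕ) ≤ (2 ^ m + 1) ^ (2 ^ m : ℕ) :=
          Nat.pow_le_pow_left (Nat.le_succ _) _
      _ ≤ Nat.factorial (2 ^ m) * (2 ^ m + 1) ^ (2 ^ m : ℕ) :=
          Nat.le_mul_of_pos_left _ (Nat.factorial_pos _)
      _ ≤ Nat.factorial (2 ^ m + 2 ^ m) := h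
      _ = Nat.factorial (2 ^ n) := by rw [hnm]; ring_nf
  have hNum : (2 ^ m : ℝ) * m ≤ Real.logb 2 (Nat.factorial (2 ^ n)) := by
    have h1 : ((2:ℝ) ^ m) ^ (2 ^ m : ℕ) ≤ (Nat.factorial (2 ^ n) : ℝ) := by
      exact_mod_cast hfact
    have h2 := Real.logb_le_logb_of_le (b := 2) (by norm_num) (by positivity) h1
    have h3 : Real.logb 2 (((2:ℝ) ^ m) ^ (2 ^ m : ℕ)) = (2 ^ m : ℝ) * m := by
      rw [Real.logb_pow, Real.logb_pow, Real.logb_self_eq_one (by norm_num)]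
      push_cast; ring
    linarith
  -- combine
  have hApos : 0 ≤ Real.logb 2 (Nat.factorial (2 ^ n)) := by
    nlinarith [pow_pos (show (0:ℝ) < 2 by norm_num) m]
  have h1 : ((2:ℝ) ^ m * m) / (2 * m) ≤
      Real.logb 2 (Nat.factorial (2 ^ n)) / Real.logb 2 ((n : ℝ) * 2 ^ m) :=
    div_le_div₀ hApos hNum hDpos hDle
  have h2 : ((2:ℝ) ^ m * m) / (2 * m) = 2 ^ n / 4 := by
    rw [hnm, pow_succ]
    field_simp
    ring
  have key : (2:ℝ) ^ n / 4 ≤ Real.logb 2 (Nat.factorial (2 ^ n)) / Real.logb 2 ((n : ℝ) * 2 ^ m) := by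
    rw [← h2]; exact h1
  calc (1/4 : ℝ) * 2 ^ n = 2 ^ n / 4 := by ring
    _ ≤ _ := key.trans (Int.le_ceil _)
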